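/- For λ > 0, define p_λ(u) = 1/2 + (1/2)·sgn(u)·(1 − e^{−|u|/λ}) for u ∈ ℝ. Let M ≥ 1 and let u_1, …, u_M be real numbers with ∑_{m=1}^{M} u_m < 0. Then there exist γ > 1 and λ_0 > 0 such that for all λ ≥ λ_0: (1/M)·∑_{m=1}^{M} p_λ(u_m) ≤ 1/2 + (∑_{m=1}^{M} u_m)/(2·M·λ·γ). -/

import Mathlib

/-- The probability that the Laplace-noise `dp-sign` compressor with scale `λ` outputs `1` on
input `u`: `p_λ(u) = 1/2 + (1/2) sgn(u) (1 - e^{-|u|/λ})`. -/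
noncomputable def pLap (lam u : ℝ) : ℝ :=
  1 / 2 + 1 / 2 * Real.sign u * (1 - Real.exp (-|u| / lam))

lemma term_bound (lam u : ℝ) (hlam : 0 < lam) :
    lam * (Real.sign u * (1 - Real.exp (-|u| / lam))) ≤ u + u ^ 2 / lam := by
  rcases lt_trichotomy u 0 with h | h | h
  · rw [Real.sign_of_neg h, abs_of_neg h]
    have hx : u / lam < 0 := div_neg_of_neg_of_pos h hlam
    have h1 : -(u / lam) + 1 ≤ Real.exp (-(u / lam)) := Real.add_one_le_exp _
    have h2 : Real.exp (u / lam) * (1 - u / lam) ≤ 1 := by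
      have h3 := mul_le_mul_of_nonneg_left h1 (Real.exp_pos (u / lam)).le
      rw [← Real.exp_add, add_neg_cancel, Real.exp_zero] at h3
      nlinarith
    have hexp : Real.exp (u / lam) ≤ 1 + u / lam + (u / lam) ^ 2 := by
      nlinarith [Real.exp_pos (u / lam), sq_nonneg (u / lam)]
    have hrw : - -u / lam = u / lam := by ring
    rw [hrw]
    have := mul_le_mul_of_nonneg_left hexp hlam.le
    have hlam' : lam ≠ 0 := ne_of_gt hlam
    have e1 : lam * (u / lam) = u := by field_simp
    have e2 : lam * (u / lam) ^ 2 = u ^ 2 / lam := by field_simp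
    nlinarith
  · simp [h]
  · rw [Real.sign_of_pos h, abs_of_pos h]
    have h1 : -(u / lam) + 1 ≤ Real.exp (-(u / lam)) := Real.add_one_le_exp _
    have hrw : -u / lam = -(u / lam) := by ring
    rw [hrw]
    have e1 : lam * (u / lam) = u := by field_simp
    have hsq : 0 ≤ u ^ 2 / lam := by positivity
    nlinarith

/-- If `∑ u_m < 0`, then there exist `γ > 1` and `lam₀ > 0` such that for all
`λ ≥ lam₀`: `(1/M) ∑ p_λ(u_m) ≤ 1/2 + (∑ u_m)/(2Mλγ)`. -/
theorem stmt_15 (M : ℕ) (hM : 1 ≤ M) (u : Fin M → ℝ) (hsum : ∑ m, u m < 0) :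
    ∃ γ > (1 : ℝ), ∃ lam₀ > (0 : ℝ), ∀ lam ≥ lam₀,
      (1 / M) * ∑ m, pLap lam (u m) ≤ 1 / 2 + (∑ m, u m) / (2 * M * lam * γ) := by
  set S := ∑ m, u m with hS
  set K := ∑ m, (u m) ^ 2 with hK
  have hK0 : 0 ≤ K := Finset.sum_nonneg fun m _ => sq_nonneg _
  have hnegS : 0 < -S := neg_pos.mpr hsum
  refine ⟨2, one_lt_two, max 1 (2 * K / (-S)),
    lt_of_lt_of_le one_pos (le_max_left _ _), fun lam hlam => ?_⟩
  have hlam1 : (1 : ℝ) ≤ lam := le_trans (le_max_left _ _) hlam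
  have hlam0 : (0 : ℝ) < lam := lt_of_lt_of_le one_pos hlam1
  have hKlam : 2 * K / (-S) ≤ lam := le_trans (le_max_right _ _) hlam
  have hKle : 2 * K ≤ lam * (-S) := (div_le_iff₀ hnegS).mp hKlam
  have hM0 : (0 : ℝ) < (M : ℝ) := by exact_mod_cast Nat.lt_of_lt_of_le Nat.zero_lt_one hM
  set T := ∑ m, Real.sign (u m) * (1 - Real.exp (-|u m| / lam)) with hT
  have hsum_bound : lam * T ≤ S + K / lam := by
    have h1 : lam * T = ∑ m, lam * (Real.sign (u m) * (1 - Real.exp (-|u m| / lam))) := by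
      rw [hT, Finset.mul_sum]
    have h2 : ∑ m, lam * (Real.sign (u m) * (1 - Real.exp (-|u m| / lam)))
        ≤ ∑ m, (u m + (u m) ^ 2 / lam) :=
      Finset.sum_le_sum fun m _ => term_bound lam (u m) hlam0
    have h3 : ∑ m, (u m + (u m) ^ 2 / lam) = S + K / lam := by
      rw [Finset.sum_add_distrib, ← Finset.sum_div]
    linarith [h1 ▸ h2, h3 ▸ h2]
  have hkey : lam * T ≤ S / 2 := by
    have : K / lam ≤ -S / 2 := by
      rw [div_le_div_iff₀ hlam0 two_pos]; nlinarith
    linarith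
  have hsump : ∑ m, pLap lam (u m) = (M : ℝ) / 2 + 1 / 2 * T := by
    unfold pLap
    rw [Finset.sum_add_distrib, Finset.sum_const, Finset.card_univ, Fintype.card_fin,
      hT, Finset.mul_sum]
    simp [mul_assoc]
    ring
  rw [hsump]
  have hgoal1 : (1 / (M : ℝ)) * ((M : ℝ) / 2 + 1 / 2 * T) = 1 / 2 + T / (2 * M) := by
    field_simp
  rw [hgoal1]
  have hdiv : T / (2 * M) ≤ S / (2 * M * lam * 2) := by
    rw [div_le_div_iff₀ (by positivity) (by positivity)]
    nlinarith [mul_le_mul_of_nonneg_left hkey (by positivity : (0:ℝ) ≤ 4 * (M:ℝ))]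
  linarith
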